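/- (Lemma 2 of the paper.) Suppose P0, P1 : ℕ → ℝ satisfy the steady-state CME of the generalized ON-OFF model with rate functions K1, K2, K3 : ℕ → ℝ, and set P(n) = P0(n) + P1(n). Let (a_n) and (b_n) be the paper's auxiliary sequences associated with K1, K2, K3. Then for every n ≥ 1, P(n) = (1/n!)·[a_n·P(0) − b_n·P0(0)]. -/
import Mathlib


open Finset

/-- Lemma 2 of the paper: for solutions of the steady-state CME of the
generalized ON-OFF model, with the paper's auxiliary sequences `a`, `b`,
the stationary distribution satisfies `P(n) = (1/n!)·[a_n·P(0) − b_n·P0(0)]` for `n ≥ 1`. -/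
theorem cme_P_formal_expression (K1 K2 K3 P0 P1 P a b : ℕ → ℝ)
    (hCME0 : ∀ n : ℕ,
      -K1 n * P0 n + K2 n * P1 n + ((n : ℝ) + 1) * P0 (n + 1) - (n : ℝ) * P0 n = 0)
    (hCME1 : ∀ n : ℕ,
      K1 n * P0 n - K2 n * P1 n + (if n = 0 then 0 else K3 (n - 1) * P1 (n - 1))
        - K3 n * P1 n + ((n : ℝ) + 1) * P1 (n + 1) - (n : ℝ) * P1 n = 0)
    (hP : ∀ n : ℕ, P n = P0 n + P1 n)
    (ha1 : a 1 = K3 0)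
    (haRec : ∀ n : ℕ, 2 ≤ n →
      a n = K3 (n - 1) * a (n - 1)
        + K3 (n - 1) * ∑ i ∈ Finset.Icc 1 (n - 2), K2 i * a i *
            ∏ j ∈ Finset.Icc (i + 1) (n - 2), ((j : ℝ) + K1 j + K2 j)
        + K3 (n - 1) * K2 0 * ∏ i ∈ Finset.Icc 1 (n - 2), ((i : ℝ) + K1 i + K2 i))
    (hb1 : b 1 = K3 0)
    (hbRec : ∀ n : ℕ, 2 ≤ n →
      b n = K3 (n - 1) * b (n - 1)
        + K3 (n - 1) * ∑ i ∈ Finset.Icc 1 (n - 2), K2 i * b i *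
            ∏ j ∈ Finset.Icc (i + 1) (n - 2), ((j : ℝ) + K1 j + K2 j)
        + K3 (n - 1) * ∏ i ∈ Finset.range (n - 1), ((i : ℝ) + K1 i + K2 i)) :
    ∀ n : ℕ, 1 ≤ n →
      P n = (1 / (n.factorial : ℝ)) * (a n * P 0 - b n * P0 0) := by
  -- Claim A : (n+1) P(n+1) = K3 n * P1 n
  have hA : ∀ n : ℕ, ((n : ℝ) + 1) * P (n + 1) = K3 n * P1 n := by
    intro n
    induction n with
    | zero =>
      have h0 := hCME0 0
      have h1 := hCME1 0
      simp only [if_pos rfl] at h1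
      have := hP 1
      push_cast at h0 h1 ⊢
      linarith
    | succ k ih =>
      have h0 := hCME0 (k + 1)
      have h1 := hCME1 (k + 1)
      simp only [Nat.succ_ne_zero, if_neg, Nat.add_sub_cancel] at h1
      have e1 := hP (k + 1)
      have e2 := hP (k + 1 + 1)
      push_cast at h0 h1 ih ⊢
      have e1' : ((k : ℝ) + 1) * P (k + 1)
          = ((k : ℝ) + 1) * P0 (k + 1) + ((k : ℝ) + 1) * P1 (k + 1) := by rw [e1]; ring
      have e2' : ((k : ℝ) + 1 + 1) * P (k + 1 + 1)
          = ((k : ℝ) + 1 + 1) * P0 (k + 1 + 1) + ((k : ℝ) + 1 + 1) * P1 (k + 1 + 1) := by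
        rw [e2]; ring
      linarith
  -- Claim B : closed form for m! * P0 m
  have hB : ∀ m : ℕ, (m.factorial : ℝ) * P0 m
      = (∏ i ∈ Finset.range m, ((i : ℝ) + K1 i + K2 i)) * P0 0
        - ∑ i ∈ Finset.range m, K2 i * ((i.factorial : ℝ) * P i)
            * ∏ j ∈ Finset.Ico (i + 1) m, ((j : ℝ) + K1 j + K2 j) := by
    intro m
    induction m with
    | zero => simp
    | succ k ih =>
      have h0 := hCME0 k
      have hP1k : P1 k = P k - P0 k := by linarith [hP k]
      have hfac : (((k + 1).factorial : ℕ) : ℝ) = ((k : ℝ) + 1) * (k.factorial : ℝ) := by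
        rw [Nat.factorial_succ]; push_cast; ring
      have key : (((k + 1).factorial : ℕ) : ℝ) * P0 (k + 1)
          = ((k : ℝ) + K1 k + K2 k) * ((k.factorial : ℝ) * P0 k)
            - K2 k * ((k.factorial : ℝ) * P k) := by
        have hstep : ((k : ℝ) + 1) * P0 (k + 1)
            = ((k : ℝ) + K1 k) * P0 k - K2 k * (P k - P0 k) := by
          rw [← hP1k]; linarith
        calc (((k + 1).factorial : ℕ) : ℝ) * P0 (k + 1)
            = (k.factorial : ℝ) * (((k : ℝ) + 1) * P0 (k + 1)) := by rw [hfac]; ring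
          _ = (k.factorial : ℝ) * (((k : ℝ) + K1 k) * P0 k - K2 k * (P k - P0 k)) := by
              rw [hstep]
          _ = _ := by ring
      have hsum : ∑ i ∈ Finset.range k, K2 i * ((i.factorial : ℝ) * P i)
            * ∏ j ∈ Finset.Ico (i + 1) (k + 1), ((j : ℝ) + K1 j + K2 j)
          = (∑ i ∈ Finset.range k, K2 i * ((i.factorial : ℝ) * P i)
            * ∏ j ∈ Finset.Ico (i + 1) k, ((j : ℝ) + K1 j + K2 j)) * ((k : ℝ) + K1 k + K2 k) := by
        rw [Finset.sum_mul]
        refine Finset.sum_congr rfl fun i hi => ?_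
        rw [Finset.prod_Ico_succ_top (Finset.mem_range.mp hi)]
        ring
      rw [key, ih, Finset.prod_range_succ, Finset.sum_range_succ, hsum]
      simp only [Finset.Ico_self, Finset.prod_empty]
      ring
  -- main statement with factorial multiplied through
  have main : ∀ n : ℕ, 1 ≤ n → (n.factorial : ℝ) * P n = a n * P 0 - b n * P0 0 := by
    intro n
    induction n using Nat.strong_induction_on with
    | _ n ih =>
      intro hn
      match n, hn with
      | 1, _ =>
        have h := hA 0
        have h0 := hP 0
        push_cast at h
        have hK : K3 0 * P1 0 = K3 0 * P 0 - K3 0 * P0 0 := by rw [h0]; ring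
        simp only [Nat.factorial_one, Nat.cast_one, ha1, hb1]
        linarith
      | (m + 2), _ =>
        have hm1 : 1 ≤ m + 1 := Nat.le_add_left 1 m
        -- factorial step
        have hfac : (((m + 2).factorial : ℕ) : ℝ)
            = ((m : ℝ) + 2) * ((m + 1).factorial : ℝ) := by
          rw [Nat.factorial_succ]; push_cast; ring
        have hAm := hA (m + 1)
        push_cast at hAm
        have hP1 : P1 (m + 1) = P (m + 1) - P0 (m + 1) := by linarith [hP (m + 1)]
        have hstep : (((m + 2).factorial : ℕ) : ℝ) * P (m + 2)
            = K3 (m + 1) * (((m + 1).factorial : ℝ) * P (m + 1)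
              - ((m + 1).factorial : ℝ) * P0 (m + 1)) := by
          rw [hfac]
          have : ((m : ℝ) + 2) * P (m + 2) = K3 (m + 1) * (P (m + 1) - P0 (m + 1)) := by
            rw [← hP1]; linarith
          calc ((m : ℝ) + 2) * ((m + 1).factorial : ℝ) * P (m + 2)
              = ((m + 1).factorial : ℝ) * (((m : ℝ) + 2) * P (m + 2)) := by ring
            _ = ((m + 1).factorial : ℝ) * (K3 (m + 1) * (P (m + 1) - P0 (m + 1))) := by
                rw [this]
            _ = _ := by ring
        -- rewrite P(m+1) via ih and P0(m+1) via hB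
        have ihm := ih (m + 1) (by omega) hm1
        have hBm := hB (m + 1)
        -- split the sum in hB at i = 0 and rewrite with ih
        have hsplit : ∑ i ∈ Finset.range (m + 1), K2 i * ((i.factorial : ℝ) * P i)
              * ∏ j ∈ Finset.Ico (i + 1) (m + 1), ((j : ℝ) + K1 j + K2 j)
            = K2 0 * P 0 * ∏ j ∈ Finset.Ico 1 (m + 1), ((j : ℝ) + K1 j + K2 j)
              + ((∑ i ∈ Finset.Ico 1 (m + 1), K2 i * a i
                  * ∏ j ∈ Finset.Ico (i + 1) (m + 1), ((j : ℝ) + K1 j + K2 j)) * P 0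
                - (∑ i ∈ Finset.Ico 1 (m + 1), K2 i * b i
                  * ∏ j ∈ Finset.Ico (i + 1) (m + 1), ((j : ℝ) + K1 j + K2 j)) * P0 0) := by
          rw [Finset.range_eq_Ico, Finset.sum_eq_sum_Ico_succ_bot (by omega : 0 < m + 1)]
          congr 1
          · simp
          · rw [Finset.sum_mul, Finset.sum_mul, ← Finset.sum_sub_distrib]
            refine Finset.sum_congr rfl fun i hi => ?_
            have hi1 : 1 ≤ i := (Finset.mem_Ico.mp hi).1
            have hilt : i < m + 2 := by
              have := (Finset.mem_Ico.mp hi).2; omega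
            rw [ih i (by omega) hi1]
            ring
        -- specialize the recursions
        have hicc1 : Finset.Icc 1 (m + 2 - 2) = Finset.Ico 1 (m + 1) := by
          rw [show m + 2 - 2 = m from rfl, Finset.Ico_add_one_right_eq_Icc]
        have hicc2 : ∀ i : ℕ, Finset.Icc (i + 1) (m + 2 - 2) = Finset.Ico (i + 1) (m + 1) := by
          intro i
          rw [show m + 2 - 2 = m from rfl, Finset.Ico_add_one_right_eq_Icc]
        have ha' := haRec (m + 2) (by omega)
        have hb' := hbRec (m + 2) (by omega)
        simp only [show m + 2 - 1 = m + 1 from rfl, hicc1, hicc2] at ha' hb'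
        rw [hstep, ihm, hBm, hsplit, ha', hb']
        ring
  intro n hn
  have h := main n hn
  have hfac : (n.factorial : ℝ) ≠ 0 := by
    exact_mod_cast Nat.factorial_ne_zero n
  field_simp
  linarith
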